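/- Assume additionally that w and q are continuously differentiable on [r₁,∞), and let Z : ℝ → ℂ be a C¹ function with compact support contained in (λ₁,∞). Define on Ω_c the phase K₁(t,r) = ∫_{r₁}^r w(s)·√(2(λ_c(t,r)−q(s))) ds − t·λ_c(t,r), the local propagation speed b̂(t,r) = w(r)^{−1}·√(2(λ_c(t,r)−q(r))), and the WKB wave u(t,r) = e^{i·K₁(t,r)}·(∂_rλ_c(t,r))^{1/2}·Z(λ_c(t,r)). Then u is continuously differentiable on Ω_c and satisfies the transport equation ∂_t u + b̂·∂_r u + (1/2)·(∂_r b̂)·u = i·(λ_c − 2·q(r))·u on Ω_c. (This is the fixed-angular-variable form of the evolution identity (3.20) for the comparison dynamics U₀^± in the paper's Lemma 3.3, obtained from the computations (3.23)–(3.25).) -/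

import Mathlib

open MeasureTheory

section WKBAux
open Set intervalIntegral

noncomputable def gsq (x : ℝ) : ℝ := Real.sqrt (2*x)
noncomputable def gmp (k : ℕ) (x : ℝ) : ℝ := (Real.sqrt (2*x))⁻¹ ^ k

lemma gsq_pos {x : ℝ} (hx : 0 < x) : 0 < gsq x := Real.sqrt_pos.2 (by linarith)
lemma gmp_pos {k : ℕ} {x : ℝ} (hx : 0 < x) : 0 < gmp k x :=
  pow_pos (inv_pos.2 (gsq_pos hx)) k

lemma hasDerivAt_gsq {x : ℝ} (hx : 0 < x) : HasDerivAt gsq (gmp 1 x) x := by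
  have h2 : (2:ℝ)*x ≠ 0 := by positivity
  have h := (Real.hasDerivAt_sqrt h2).comp x ((hasDerivAt_id x).const_mul 2)
  refine h.congr_deriv ?_
  have hs : Real.sqrt (2*x) ≠ 0 := ne_of_gt (gsq_pos hx)
  simp only [gmp, pow_one]
  field_simp

lemma hasDerivAt_gmp {k : ℕ} {x : ℝ} (hx : 0 < x) :
    HasDerivAt (gmp k) (-(k:ℝ) * gmp (k+2) x) x := by
  have hs : gsq x ≠ 0 := ne_of_gt (gsq_pos hx)
  have hinv : HasDerivAt (fun x => (Real.sqrt (2*x))⁻¹) (-(gmp 1 x) / (gsq x)^2) x :=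
    (hasDerivAt_gsq hx).inv hs
  have h := hinv.pow k
  refine h.congr_deriv ?_
  rcases k with _ | n
  · simp [gmp]
  · have h3 : (-gmp 1 x / gsq x ^ 2) = -((Real.sqrt (2*x))⁻¹)^3 := by
      have hS : Real.sqrt (2*x) ≠ 0 := hs
      simp only [gmp, pow_one, gsq]
      field_simp
    rw [h3]
    simp only [gmp, Nat.add_sub_cancel]
    push_cast
    ring

lemma contDiffOn_gmp (k : ℕ) : ContDiffOn ℝ 1 (gmp k) (Ioi 0) := by
  have h1 : ContDiffOn ℝ 1 (fun x : ℝ => Real.sqrt (2*x)) (Ioi 0) := by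
    intro x hx
    exact ((Real.contDiffAt_sqrt (by simp at hx; positivity)).comp x
      ((contDiff_const.mul contDiff_id).contDiffAt)).contDiffWithinAt
  exact (h1.inv (fun x hx => ne_of_gt (gsq_pos hx))).pow k

lemma contDiffOn_gsq : ContDiffOn ℝ 1 gsq (Ioi 0) := by
  intro x hx
  exact ((Real.contDiffAt_sqrt (by simp at hx; positivity)).comp x
    ((contDiff_const.mul contDiff_id).contDiffAt)).contDiffWithinAt

lemma phi_hasFDerivAt {a r1 : ℝ} {w q : ℝ → ℝ} (hw : Continuous w) (hq : Continuous q)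
    (hqa : ∀ s, q s ≤ a) {g g' : ℝ → ℝ}
    (hgd : ∀ x, 0 < x → HasDerivAt g (g' x) x)
    (hgc' : ContinuousOn g' (Set.Ioi 0))
    {l r : ℝ} (hl : a < l) :
    HasFDerivAt (fun p : ℝ × ℝ => ∫ s in r1..p.2, w s * g (p.1 - q s))
      ((∫ s in r1..r, w s * g' (l - q s)) • ContinuousLinearMap.fst ℝ ℝ ℝ
        + (w r * g (l - q r)) • ContinuousLinearMap.snd ℝ ℝ ℝ) (l, r) := by
  have hgc : ContinuousOn g (Set.Ioi 0) := fun x hx =>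
    (hgd x hx).continuousAt.continuousWithinAt
  set ε := (l - a) / 2 with hε
  have hεpos : 0 < ε := by simp [hε]; linarith
  have hball : ∀ x : ℝ, x ∈ Metric.ball l ε → a < x := by
    intro x hx
    rw [Metric.mem_ball, Real.dist_eq, abs_lt] at hx
    simp [hε] at hx ⊢; linarith [hx.1]
  -- continuity in s for fixed parameter > a
  have hcont : ∀ x : ℝ, a < x → Continuous fun s => w s * g (x - q s) := by
    intro x hx
    refine hw.mul (hgc.comp_continuous (continuous_const.sub hq) fun s => ?_)
    simp only [Set.mem_Ioi, sub_pos]; linarith [hqa s]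
  have hcont' : ∀ x : ℝ, a < x → Continuous fun s => w s * g' (x - q s) := by
    intro x hx
    refine hw.mul (hgc'.comp_continuous (continuous_const.sub hq) fun s => ?_)
    simp only [Set.mem_Ioi, sub_pos]; linarith [hqa s]
  have hInt : ∀ x : ℝ, a < x → ∀ u v : ℝ,
      IntervalIntegrable (fun s => w s * g (x - q s)) volume u v := fun x hx u v =>
    (hcont x hx).intervalIntegrable u v
  -- joint continuity on O
  have hO : IsOpen ((Set.Ioi a) ×ˢ (Set.univ : Set ℝ)) := isOpen_Ioi.prod isOpen_univ
  have hFj : ContinuousOn (fun p : ℝ × ℝ => w p.2 * g (p.1 - q p.2))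
      ((Set.Ioi a) ×ˢ (Set.univ : Set ℝ)) := by
    refine ((hw.comp continuous_snd).continuousOn).mul
      (hgc.comp ((continuous_fst.sub (hq.comp continuous_snd)).continuousOn) ?_)
    rintro ⟨x, s⟩ ⟨hx, -⟩
    simp only [Set.mem_Ioi, sub_pos] at hx ⊢
    linarith [hqa s]
  have hF'j : ContinuousOn (fun p : ℝ × ℝ => w p.2 * g' (p.1 - q p.2))
      ((Set.Ioi a) ×ˢ (Set.univ : Set ℝ)) := by
    refine ((hw.comp continuous_snd).continuousOn).mul
      (hgc'.comp ((continuous_fst.sub (hq.comp continuous_snd)).continuousOn) ?_)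
    rintro ⟨x, s⟩ ⟨hx, -⟩
    simp only [Set.mem_Ioi, sub_pos] at hx ⊢
    linarith [hqa s]
  -- Part 1 : derivative in the parameter
  have hpart1 : HasDerivAt (fun x => ∫ s in r1..r, w s * g (x - q s))
      (∫ s in r1..r, w s * g' (l - q s)) l := by
    obtain ⟨M, hM⟩ : ∃ M, ∀ p ∈ (Set.Icc (l - ε) (l + ε)) ×ˢ (Set.uIcc r1 r),
        ‖w p.2 * g' (p.1 - q p.2)‖ ≤ M := by
      refine (((isCompact_Icc).prod isCompact_uIcc)).exists_bound_of_continuousOn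
        (hF'j.mono ?_)
      rintro ⟨x, s⟩ ⟨hx, -⟩
      exact ⟨by simp only [Set.mem_Ioi]; have := hx.1; simp [hε] at this ⊢; linarith, trivial⟩
    have key := intervalIntegral.hasDerivAt_integral_of_dominated_loc_of_deriv_le
      (F := fun x s => w s * g (x - q s)) (F' := fun x s => w s * g' (x - q s))
      (x₀ := l) (a := r1) (b := r) (bound := fun _ => M) (μ := volume) (Metric.ball_mem_nhds l hεpos)
      ?_ (hInt l hl r1 r) ?_ ?_ ?_ ?_
    · exact key.2
    · filter_upwards [Metric.ball_mem_nhds l hεpos] with x hx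
      exact ((hcont x (hball x hx)).aestronglyMeasurable).restrict
    · exact ((hcont' l hl).aestronglyMeasurable).restrict
    · refine Filter.Eventually.of_forall fun s hs x hx => ?_
      refine hM (x, s) ⟨?_, Set.uIoc_subset_uIcc hs⟩
      rw [Metric.mem_ball, Real.dist_eq, abs_lt] at hx
      exact ⟨by linarith [hx.1], by linarith [hx.2]⟩
    · exact intervalIntegrable_const
    · refine Filter.Eventually.of_forall fun s hs x hx => ?_
      have hx' : a < x := hball x hx
      have hpos : 0 < x - q s := by linarith [hqa s]
      have := ((hgd _ hpos).comp x ((hasDerivAt_id x).sub_const (q s))).const_mul (w s)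
      simpa using this
  -- Part 2 : derivative in the endpoint
  have hpart2 : HasFDerivAt (fun p : ℝ × ℝ => ∫ s in r..p.2, w s * g (p.1 - q s))
      ((w r * g (l - q r)) • ContinuousLinearMap.snd ℝ ℝ ℝ) (l, r) := by
    rw [hasFDerivAt_iff_isLittleO, Asymptotics.isLittleO_iff]
    intro c hc
    have hFat : ContinuousAt (fun p : ℝ × ℝ => w p.2 * g (p.1 - q p.2)) (l, r) :=
      hFj.continuousAt (hO.mem_nhds ⟨hl, trivial⟩)
    obtain ⟨δ, hδpos, hδ⟩ := Metric.continuousAt_iff.1 hFat c hc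
    set δ' := min δ ε with hδ'
    have hδ'pos : 0 < δ' := lt_min hδpos hεpos
    filter_upwards [Metric.ball_mem_nhds (l, r) hδ'pos] with p hp
    obtain ⟨x, y⟩ := p
    have hdist : dist (x, y) (l, r) < δ' := Metric.mem_ball.1 hp
    have hdx : dist x l < δ' := lt_of_le_of_lt (by
      rw [Prod.dist_eq]; exact le_max_left _ _) hdist
    have hdy : dist y r < δ' := lt_of_le_of_lt (by
      rw [Prod.dist_eq]; exact le_max_right _ _) hdist
    have hax : a < x := by
      rw [Real.dist_eq, abs_lt] at hdx
      have : δ' ≤ ε := min_le_right _ _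
      simp [hε] at this ⊢; nlinarith [hdx.1]
    set B := w r * g (l - q r) with hB
    have hint1 : IntervalIntegrable (fun s => w s * g (x - q s)) volume r y :=
      hInt x hax r y
    have heq : ((∫ s in r..y, w s * g (x - q s)) - (∫ s in r..r, w s * g (l - q s)))
        - (B • ContinuousLinearMap.snd ℝ ℝ ℝ) ((x, y) - (l, r))
        = ∫ s in r..y, (w s * g (x - q s) - B) := by
      rw [intervalIntegral.integral_same, sub_zero,
        intervalIntegral.integral_sub hint1 intervalIntegrable_const,
        intervalIntegral.integral_const]
      simp only [B, smul_eq_mul, ContinuousLinearMap.coe_smul', Pi.smul_apply,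
        ContinuousLinearMap.coe_snd', Prod.snd_sub]
      ring
    calc ‖((∫ s in r..y, w s * g (x - q s)) - (∫ s in r..r, w s * g (l - q s)))
        - (B • ContinuousLinearMap.snd ℝ ℝ ℝ) ((x, y) - (l, r))‖
        = ‖∫ s in r..y, (w s * g (x - q s) - B)‖ := by rw [heq]
      _ ≤ c * |y - r| := by
          refine intervalIntegral.norm_integral_le_of_norm_le_const fun s hs => ?_
          have hsr : |s - r| ≤ |y - r| := by
            rcases le_total r y with h | h
            · rw [Set.uIoc_of_le h] at hs
              rw [abs_of_pos (by linarith [hs.1] : (0:ℝ) < s - r),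
                abs_of_nonneg (by linarith : (0:ℝ) ≤ y - r)]
              linarith [hs.2]
            · rw [Set.uIoc_of_ge h] at hs
              rw [abs_of_nonpos (by linarith [hs.2] : s - r ≤ 0),
                abs_of_nonpos (by linarith : y - r ≤ 0)]
              linarith [hs.1]
          have hds : dist (x, s) (l, r) < δ := by
            rw [Prod.dist_eq]
            refine max_lt (lt_of_lt_of_le hdx (min_le_left _ _)) ?_
            rw [Real.dist_eq]
            exact lt_of_le_of_lt hsr (lt_of_lt_of_le (by rw [Real.dist_eq] at hdy; exact hdy)
              (min_le_left _ _))
          have := hδ hds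
          rw [Real.dist_eq] at this
          exact le_of_lt this
      _ ≤ c * ‖(x, y) - (l, r)‖ := by
          refine mul_le_mul_of_nonneg_left ?_ (le_of_lt hc)
          rw [Prod.norm_def]
          simpa [Real.norm_eq_abs] using le_max_right |x - l| |y - r|
  -- Part 3 : combine
  have hpart1' : HasFDerivAt (fun p : ℝ × ℝ => ∫ s in r1..r, w s * g (p.1 - q s))
      ((∫ s in r1..r, w s * g' (l - q s)) • ContinuousLinearMap.fst ℝ ℝ ℝ) (l, r) := by
    exact hpart1.comp_hasFDerivAt (l, r) (hasFDerivAt_fst (𝕜 := ℝ) (p := (l, r)))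
  have hsum := hpart1'.add hpart2
  refine hsum.congr_of_eventuallyEq ?_
  have hmem : {p : ℝ × ℝ | p.1 ∈ Metric.ball l ε} ∈ nhds (l, r) := by
    exact continuous_fst.continuousAt.preimage_mem_nhds (Metric.ball_mem_nhds l hεpos)
  filter_upwards [hmem] with p hp
  have hax : a < p.1 := hball p.1 hp
  exact (intervalIntegral.integral_add_adjacent_intervals (hInt p.1 hax r1 r)
    (hInt p.1 hax r p.2)).symm

lemma clm_eval (A B u v : ℝ) :
    ((A • ContinuousLinearMap.fst ℝ ℝ ℝ + B • ContinuousLinearMap.snd ℝ ℝ ℝ)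
      : ℝ × ℝ →L[ℝ] ℝ) (u, v) = A * u + B * v := by simp

lemma hasDerivAt_comp_curve {Φ : ℝ × ℝ → ℝ} {A B : ℝ} {f g : ℝ → ℝ} {x : ℝ} {f' g' : ℝ}
    (hΦ : HasFDerivAt Φ
      ((A • ContinuousLinearMap.fst ℝ ℝ ℝ + B • ContinuousLinearMap.snd ℝ ℝ ℝ)) (f x, g x))
    (hf : HasDerivAt f f' x) (hg : HasDerivAt g g' x) :
    HasDerivAt (fun y => Φ (f y, g y)) (A * f' + B * g') x := by
  have h := hΦ.comp_hasDerivAt x (hf.prodMk hg)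
  rw [clm_eval] at h
  exact h

lemma phi_contDiffOn {a r1 : ℝ} {w q : ℝ → ℝ} (hw : Continuous w) (hq : Continuous q)
    (hqa : ∀ s, q s ≤ a) {g g' g'' : ℝ → ℝ}
    (hgd : ∀ x, 0 < x → HasDerivAt g (g' x) x)
    (hgd' : ∀ x, 0 < x → HasDerivAt g' (g'' x) x)
    (hgc'' : ContinuousOn g'' (Set.Ioi 0)) :
    ContDiffOn ℝ 1 (fun p : ℝ × ℝ => ∫ s in r1..p.2, w s * g (p.1 - q s))
      ((Set.Ioi a) ×ˢ (Set.univ : Set ℝ)) := by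
  have hgc' : ContinuousOn g' (Set.Ioi 0) := fun x hx =>
    (hgd' x hx).continuousAt.continuousWithinAt
  have hgc : ContinuousOn g (Set.Ioi 0) := fun x hx =>
    (hgd x hx).continuousAt.continuousWithinAt
  have hO : IsOpen ((Set.Ioi a) ×ˢ (Set.univ : Set ℝ)) := isOpen_Ioi.prod isOpen_univ
  intro p hp
  refine (contDiffAt_one_iff.mpr ?_).contDiffWithinAt
  refine ⟨fun p' => (∫ s in r1..p'.2, w s * g' (p'.1 - q s)) • ContinuousLinearMap.fst ℝ ℝ ℝ
    + (w p'.2 * g (p'.1 - q p'.2)) • ContinuousLinearMap.snd ℝ ℝ ℝ,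
    (Set.Ioi a) ×ˢ (Set.univ : Set ℝ), hO.mem_nhds hp, ?_, ?_⟩
  · -- continuity of the derivative
    have hA : ContinuousOn (fun p' : ℝ × ℝ => ∫ s in r1..p'.2, w s * g' (p'.1 - q s))
        ((Set.Ioi a) ×ˢ (Set.univ : Set ℝ)) := fun p' hp' =>
      (phi_hasFDerivAt hw hq hqa hgd' (fun x hx =>
        (hgc'' x hx)) hp'.1).continuousAt.continuousWithinAt
    have hB : ContinuousOn (fun p' : ℝ × ℝ => w p'.2 * g (p'.1 - q p'.2))
        ((Set.Ioi a) ×ˢ (Set.univ : Set ℝ)) := by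
      refine ((hw.comp continuous_snd).continuousOn).mul
        (hgc.comp ((continuous_fst.sub (hq.comp continuous_snd)).continuousOn) ?_)
      rintro ⟨x, s⟩ ⟨hx, -⟩
      simp only [Set.mem_Ioi, sub_pos] at hx ⊢
      linarith [hqa s]
    exact (hA.smul continuousOn_const).add (hB.smul continuousOn_const)
  · exact fun p' hp' => phi_hasFDerivAt hw hq hqa hgd hgc' hp'.1

lemma clm_eval2 (L : ℝ × ℝ →L[ℝ] ℝ) (u v : ℝ) : L (u, v) = u * L (1, 0) + v * L (0, 1) := by
  have h : (u, v) = u • ((1:ℝ), (0:ℝ)) + v • ((0:ℝ), (1:ℝ)) := by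
    simp [Prod.ext_iff]
  rw [h, map_add, L.map_smul, L.map_smul, smul_eq_mul, smul_eq_mul]
end WKBAux
set_option maxHeartbeats 1000000 in
/-- Fixed-angular-variable form of the evolution identity (3.20)
for the comparison dynamics in the paper's Lemma 3.3: with the phase `K₁`, the
local propagation speed `b̂ = w(r)⁻¹√(2(λ_c−q(r)))` and the WKB wave
`u = e^{iK₁}(∂_rλ_c)^{1/2}Z(λ_c)`, the function `u` is `C¹` on `Ω_c` and satisfies
`∂_t u + b̂ ∂_r u + ½(∂_r b̂) u = i(λ_c − 2q(r)) u` on `Ω_c`. -/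
theorem WKB_transport_equation
    (lam0 lam1 r1 c1 c2 m : ℝ)
    (hlam : lam0 < lam1) (hr1 : 1 ≤ r1) (hc1 : 0 < c1) (hc12 : c1 ≤ c2)
    (hm : m ≤ (lam0 + lam1) / 2)
    (w q : ℝ → ℝ)
    (hw : ContDiffOn ℝ 1 w (Set.Ici r1))
    (hwl : ∀ s, r1 ≤ s → c1 ≤ w s) (hwu : ∀ s, r1 ≤ s → w s ≤ c2)
    (hq : ContDiffOn ℝ 1 q (Set.Ici r1))
    (hql : ∀ s, r1 ≤ s → m ≤ q s) (hqu : ∀ s, r1 ≤ s → q s ≤ (lam0 + lam1) / 2)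
    (T : ℝ → ℝ → ℝ)
    (hT : ∀ lam r, T lam r = ∫ s in r1..r, w s / Real.sqrt (2 * (lam - q s)))
    (Ωc : Set (ℝ × ℝ))
    (hΩc : Ωc = {p : ℝ × ℝ | 0 < p.1 ∧ r1 < p.2 ∧ p.1 < T lam1 p.2})
    (lamc : ℝ → ℝ → ℝ)
    (hlamc : ∀ p ∈ Ωc, lam1 < lamc p.1 p.2 ∧ T (lamc p.1 p.2) p.2 = p.1)
    (hlamC1 : ContDiffOn ℝ 1 (fun p : ℝ × ℝ => lamc p.1 p.2) Ωc)
    (D : ℝ → ℝ → ℝ)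
    (hD : ∀ p ∈ Ωc, HasDerivAt (fun r => lamc p.1 r) (D p.1 p.2) p.2 ∧ 0 < D p.1 p.2)
    (Z : ℝ → ℂ)
    (hZ : ContDiff ℝ 1 Z) (hZc : HasCompactSupport Z)
    (hZsupp : tsupport Z ⊆ Set.Ioi lam1)
    (K1 : ℝ → ℝ → ℝ)
    (hK1 : ∀ t r, K1 t r
      = (∫ s in r1..r, w s * Real.sqrt (2 * (lamc t r - q s))) - t * lamc t r)
    (bhat : ℝ → ℝ → ℝ)
    (hbhat : ∀ t r, bhat t r = (w r)⁻¹ * Real.sqrt (2 * (lamc t r - q r)))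
    (u : ℝ → ℝ → ℂ)
    (hu : ∀ t r, u t r
      = Complex.exp (Complex.I * (K1 t r : ℂ))
          * (Real.sqrt (D t r) : ℂ) * Z (lamc t r)) :
    ContDiffOn ℝ 1 (fun p : ℝ × ℝ => u p.1 p.2) Ωc ∧
    ∀ p ∈ Ωc,
      deriv (fun t => u t p.2) p.1
        + (bhat p.1 p.2 : ℂ) * deriv (fun r => u p.1 r) p.2
        + (1 / 2 : ℂ) * (deriv (fun r => bhat p.1 r) p.2 : ℂ) * u p.1 p.2
      = Complex.I * ((lamc p.1 p.2 : ℂ) - 2 * (q p.2 : ℂ)) * u p.1 p.2 := by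
  classical
  set a : ℝ := (lam0 + lam1) / 2 with ha
  have haltlam1 : a < lam1 := by simp only [ha]; linarith
  -- extended coefficient functions
  set wt : ℝ → ℝ := fun s => w (max s r1) with hwt
  set qt : ℝ → ℝ := fun s => q (max s r1) with hqt
  have hwtc : Continuous wt :=
    hw.continuousOn.comp_continuous (continuous_id.max continuous_const)
      (fun s => Set.mem_Ici.2 (le_max_right _ _))
  have hqtc : Continuous qt :=
    hq.continuousOn.comp_continuous (continuous_id.max continuous_const)
      (fun s => Set.mem_Ici.2 (le_max_right _ _))
  have hqta : ∀ s, qt s ≤ a := fun s => hqu _ (le_max_right _ _)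
  have hwtl : ∀ s, c1 ≤ wt s := fun s => hwl _ (le_max_right _ _)
  have hwteq : ∀ s, r1 ≤ s → wt s = w s := fun s hs => by
    simp only [hwt, max_eq_left hs]
  have hqteq : ∀ s, r1 ≤ s → qt s = q s := fun s hs => by
    simp only [hqt, max_eq_left hs]
  -- the three parametric integrals
  set Φ1 : ℝ × ℝ → ℝ := fun p => ∫ s in r1..p.2, wt s * gsq (p.1 - qt s) with hΦ1
  set Φm1 : ℝ × ℝ → ℝ := fun p => ∫ s in r1..p.2, wt s * gmp 1 (p.1 - qt s) with hΦm1
  set Φm3 : ℝ × ℝ → ℝ := fun p => ∫ s in r1..p.2, wt s * gmp 3 (p.1 - qt s) with hΦm3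
  -- derivative pairs
  have hd_gsq : ∀ x, 0 < x → HasDerivAt gsq (gmp 1 x) x := fun x hx => hasDerivAt_gsq hx
  have hd_gm1 : ∀ x, 0 < x → HasDerivAt (gmp 1) (-gmp 3 x) x := fun x hx => by
    simpa using hasDerivAt_gmp (k := 1) hx
  have hd_gm3 : ∀ x, 0 < x → HasDerivAt (gmp 3) (-3 * gmp 5 x) x := fun x hx => by
    simpa using hasDerivAt_gmp (k := 3) hx
  have hd_gm5 : ∀ x, 0 < x → HasDerivAt (gmp 5) (-5 * gmp 7 x) x := fun x hx => by
    simpa using hasDerivAt_gmp (k := 5) hx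
  have hc_gm : ∀ k : ℕ, ContinuousOn (gmp k) (Set.Ioi 0) := fun k =>
    (contDiffOn_gmp k).continuousOn
  have hc_gm3' : ContinuousOn (fun x => -gmp 3 x) (Set.Ioi 0) := (hc_gm 3).neg
  have hc_gm5' : ContinuousOn (fun x => -3 * gmp 5 x) (Set.Ioi 0) :=
    continuousOn_const.mul (hc_gm 5)
  have hc_gm7' : ContinuousOn (fun x => -5 * gmp 7 x) (Set.Ioi 0) :=
    continuousOn_const.mul (hc_gm 7)
  -- rewriting T and K1 integrals
  have hTeq : ∀ l r', r1 ≤ r' → T l r' = Φm1 (l, r') := by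
    intro l r' hr'
    rw [hT]
    refine intervalIntegral.integral_congr fun s hs => ?_
    rw [Set.uIcc_of_le hr'] at hs
    simp only [hwteq s hs.1, hqteq s hs.1, gmp, pow_one, div_eq_mul_inv]
  have hK1eq : ∀ t r', r1 ≤ r' → K1 t r'
      = Φ1 (lamc t r', r') - t * lamc t r' := by
    intro t r' hr'
    rw [hK1]
    congr 1
    refine intervalIntegral.integral_congr fun s hs => ?_
    rw [Set.uIcc_of_le hr'] at hs
    simp only [hwteq s hs.1, hqteq s hs.1, gsq]
  -- openness of Ωc
  have hΩeq : Ωc = {p : ℝ × ℝ | 0 < p.1} ∩ {p : ℝ × ℝ | r1 < p.2}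
      ∩ {p : ℝ × ℝ | p.1 < Φm1 (lam1, p.2)} := by
    rw [hΩc]
    ext p
    simp only [Set.mem_setOf_eq, Set.mem_inter_iff]
    constructor
    · rintro ⟨h1, h2, h3⟩
      exact ⟨⟨h1, h2⟩, by rwa [hTeq lam1 p.2 (le_of_lt h2)] at h3⟩
    · rintro ⟨⟨h1, h2⟩, h3⟩
      exact ⟨h1, h2, by rwa [hTeq lam1 p.2 (le_of_lt h2)]⟩
  have hΦm1lam1cont : Continuous fun r' => Φm1 (lam1, r') := by
    have hic : Continuous fun s => wt s * gmp 1 (lam1 - qt s) := by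
      refine hwtc.mul ((hc_gm 1).comp_continuous (continuous_const.sub hqtc) fun s => ?_)
      simp only [Set.mem_Ioi, sub_pos]
      exact lt_of_le_of_lt (hqta s) haltlam1
    exact intervalIntegral.continuous_primitive (fun u v => hic.intervalIntegrable u v) r1
  have hΩo : IsOpen Ωc := by
    rw [hΩeq]
    exact ((isOpen_lt continuous_const continuous_fst).inter
      (isOpen_lt continuous_const continuous_snd)).inter
      (isOpen_lt continuous_fst (hΦm1lam1cont.comp continuous_snd))
  -- basic facts about points of Ωc
  have hr1lt : ∀ p ∈ Ωc, r1 < p.2 := fun p hp => by rw [hΩc] at hp; exact hp.2.1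
  have hlamgt : ∀ p ∈ Ωc, a < lamc p.1 p.2 := fun p hp =>
    lt_trans haltlam1 (hlamc p hp).1
  -- positivity of Φm3
  have hHpos : ∀ l r', a < l → r1 < r' → 0 < Φm3 (l, r') := by
    intro l r' hl hr'
    have hic : Continuous fun s => wt s * gmp 3 (l - qt s) := by
      refine hwtc.mul ((hc_gm 3).comp_continuous (continuous_const.sub hqtc) fun s => ?_)
      simp only [Set.mem_Ioi, sub_pos]
      exact lt_of_le_of_lt (hqta s) hl
    refine intervalIntegral.intervalIntegral_pos_of_pos_on
      (hic.intervalIntegrable r1 r') (fun x _ => ?_) hr'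
    have hx : 0 < l - qt x := by linarith [hqta x]
    exact mul_pos (lt_of_lt_of_le hc1 (hwtl x)) (gmp_pos hx)
    -- joint differentiability of lamc, and the t-partial derivative
  have hlamfd : ∀ p ∈ Ωc, HasFDerivAt (fun p' : ℝ × ℝ => lamc p'.1 p'.2)
      (fderiv ℝ (fun p' : ℝ × ℝ => lamc p'.1 p'.2) p) p := fun p hp =>
    (((hlamC1.contDiffAt (hΩo.mem_nhds hp)).differentiableAt one_ne_zero).hasFDerivAt)
  have hlamt : ∀ p ∈ Ωc, HasDerivAt (fun t' => lamc t' p.2)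
      (fderiv ℝ (fun p' : ℝ × ℝ => lamc p'.1 p'.2) p (1, 0)) p.1 := by
    intro p hp
    have h := (hlamfd p hp).comp_hasDerivAt p.1
      ((hasDerivAt_id p.1).prodMk (hasDerivAt_const p.1 p.2))
    exact h
  -- the fundamental relations from differentiating T(lamc, ·) = t
  have hmemr : ∀ p ∈ Ωc, ∀ᶠ r' in nhds p.2, (p.1, r') ∈ Ωc := by
    intro p hp
    exact (Continuous.prodMk_right p.1).continuousAt.preimage_mem_nhds (hΩo.mem_nhds (by
      simpa using hp))
  have hmemt : ∀ p ∈ Ωc, ∀ᶠ t' in nhds p.1, (t', p.2) ∈ Ωc := by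
    intro p hp
    have hc : Continuous fun t' : ℝ => (t', p.2) := continuous_id.prodMk continuous_const
    exact hc.continuousAt.preimage_mem_nhds (hΩo.mem_nhds (by simpa using hp))
  have hR1 : ∀ p ∈ Ωc,
      Φm3 (lamc p.1 p.2, p.2) * D p.1 p.2 = wt p.2 * gmp 1 (lamc p.1 p.2 - qt p.2) := by
    intro p hp
    set l := lamc p.1 p.2 with hl
    have hfd : HasFDerivAt Φm1
        ((∫ s in r1..p.2, wt s * (-gmp 3 (l - qt s))) • ContinuousLinearMap.fst ℝ ℝ ℝ
          + (wt p.2 * gmp 1 (l - qt p.2)) • ContinuousLinearMap.snd ℝ ℝ ℝ) (l, p.2) :=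
      phi_hasFDerivAt hwtc hqtc hqta hd_gm1 hc_gm3' (hlamgt p hp)
    have hcurve : HasDerivAt (fun r' => Φm1 (lamc p.1 r', r'))
        ((∫ s in r1..p.2, wt s * (-gmp 3 (l - qt s))) * D p.1 p.2
          + (wt p.2 * gmp 1 (l - qt p.2)) * 1) p.2 :=
      hasDerivAt_comp_curve hfd (hD p hp).1 (hasDerivAt_id p.2)
    have hev : (fun r' => Φm1 (lamc p.1 r', r')) =ᶠ[nhds p.2] fun _ => p.1 := by
      filter_upwards [hmemr p hp] with r' hr'
      rw [← hTeq (lamc p.1 r') r' (le_of_lt (hr1lt (p.1, r') hr'))]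
      exact (hlamc _ hr').2
    have hconst : HasDerivAt (fun _ : ℝ => p.1)
        ((∫ s in r1..p.2, wt s * (-gmp 3 (l - qt s))) * D p.1 p.2
          + (wt p.2 * gmp 1 (l - qt p.2)) * 1) p.2 :=
      hcurve.congr_of_eventuallyEq hev.symm
    have hzero := hconst.unique (hasDerivAt_const p.2 p.1)
    have hneg : (∫ s in r1..p.2, wt s * (-gmp 3 (l - qt s))) = -Φm3 (l, p.2) := by
      simp only [mul_neg, hΦm3]
      rw [intervalIntegral.integral_neg]
    rw [hneg] at hzero
    nlinarith [hzero]
  have hR2 : ∀ p ∈ Ωc,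
      Φm3 (lamc p.1 p.2, p.2) * fderiv ℝ (fun p' : ℝ × ℝ => lamc p'.1 p'.2) p (1, 0)
        = -1 := by
    intro p hp
    set l := lamc p.1 p.2 with hl
    have hfd : HasFDerivAt Φm1
        ((∫ s in r1..p.2, wt s * (-gmp 3 (l - qt s))) • ContinuousLinearMap.fst ℝ ℝ ℝ
          + (wt p.2 * gmp 1 (l - qt p.2)) • ContinuousLinearMap.snd ℝ ℝ ℝ) (l, p.2) :=
      phi_hasFDerivAt hwtc hqtc hqta hd_gm1 hc_gm3' (hlamgt p hp)
    have hcurve : HasDerivAt (fun t' => Φm1 (lamc t' p.2, p.2))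
        ((∫ s in r1..p.2, wt s * (-gmp 3 (l - qt s)))
            * fderiv ℝ (fun p' : ℝ × ℝ => lamc p'.1 p'.2) p (1, 0)
          + (wt p.2 * gmp 1 (l - qt p.2)) * 0) p.1 :=
      hasDerivAt_comp_curve hfd (hlamt p hp) (hasDerivAt_const p.1 p.2)
    have hev : (fun t' => Φm1 (lamc t' p.2, p.2)) =ᶠ[nhds p.1] fun t' => t' := by
      filter_upwards [hmemt p hp] with t' ht'
      rw [← hTeq (lamc t' p.2) p.2 (le_of_lt (hr1lt (t', p.2) ht'))]
      exact (hlamc _ ht').2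
    have hid : HasDerivAt (fun t' : ℝ => t')
        ((∫ s in r1..p.2, wt s * (-gmp 3 (l - qt s)))
            * fderiv ℝ (fun p' : ℝ × ℝ => lamc p'.1 p'.2) p (1, 0)
          + (wt p.2 * gmp 1 (l - qt p.2)) * 0) p.1 :=
      hcurve.congr_of_eventuallyEq hev.symm
    have hone := hid.unique (hasDerivAt_id p.1)
    have hneg : (∫ s in r1..p.2, wt s * (-gmp 3 (l - qt s))) = -Φm3 (l, p.2) := by
      simp only [mul_neg, hΦm3]
      rw [intervalIntegral.integral_neg]
    rw [hneg] at hone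
    nlinarith [hone]
  -- explicit formula for D on Ωc
  set φ : ℝ × ℝ → ℝ := fun v =>
    w v.2 * gmp 1 (v.1 - q v.2) * (Φm3 v)⁻¹ with hφdef
  set ψ : ℝ × ℝ → ℝ := fun p' => φ (lamc p'.1 p'.2, p'.2) with hψdef
  have hHne : ∀ p ∈ Ωc, Φm3 (lamc p.1 p.2, p.2) ≠ 0 := fun p hp =>
    ne_of_gt (hHpos _ _ (hlamgt p hp) (hr1lt p hp))
  have hDψ : ∀ p ∈ Ωc, D p.1 p.2 = ψ p := by
    intro p hp
    have h1 := hR1 p hp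
    rw [hwteq _ (le_of_lt (hr1lt p hp)), hqteq _ (le_of_lt (hr1lt p hp))] at h1
    have h2 := hHne p hp
    simp only [hψdef, hφdef]
    field_simp
    linarith [h1]
    -- Part A : C¹ regularity of u on Ωc
  have hr1le : ∀ p ∈ Ωc, r1 ≤ p.2 := fun p hp => le_of_lt (hr1lt p hp)
  have hsndC : ContDiffOn ℝ 1 (fun p : ℝ × ℝ => p.2) Ωc := contDiff_snd.contDiffOn
  have hpairC : ContDiffOn ℝ 1 (fun p : ℝ × ℝ => (lamc p.1 p.2, p.2)) Ωc :=
    hlamC1.prodMk hsndC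
  have hmapsV : Set.MapsTo (fun p : ℝ × ℝ => (lamc p.1 p.2, p.2)) Ωc
      ((Set.Ioi a) ×ˢ (Set.univ : Set ℝ)) := fun p hp => ⟨hlamgt p hp, trivial⟩
  have hΦ1C : ContDiffOn ℝ 1 Φ1 ((Set.Ioi a) ×ˢ (Set.univ : Set ℝ)) :=
    phi_contDiffOn hwtc hqtc hqta hd_gsq hd_gm1 hc_gm3'
  have hd_gm5' : ∀ x, 0 < x → HasDerivAt (fun y => -3 * gmp 5 y) (15 * gmp 7 x) x := by
    intro x hx
    have h := (hd_gm5 x hx).const_mul (-3 : ℝ)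
    refine h.congr_deriv ?_
    ring
  have hc_gm15 : ContinuousOn (fun x => (15:ℝ) * gmp 7 x) (Set.Ioi 0) :=
    continuousOn_const.mul (hc_gm 7)
  have hΦm3C : ContDiffOn ℝ 1 Φm3 ((Set.Ioi a) ×ˢ (Set.univ : Set ℝ)) :=
    phi_contDiffOn hwtc hqtc hqta hd_gm3 hd_gm5' hc_gm15
  have hΦ1comp : ContDiffOn ℝ 1 (fun p : ℝ × ℝ => Φ1 (lamc p.1 p.2, p.2)) Ωc :=
    hΦ1C.comp hpairC hmapsV
  have hK1C : ContDiffOn ℝ 1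
      (fun p : ℝ × ℝ => Φ1 (lamc p.1 p.2, p.2) - p.1 * lamc p.1 p.2) Ωc :=
    hΦ1comp.sub (contDiff_fst.contDiffOn.mul hlamC1)
  have hwcomp : ContDiffOn ℝ 1 (fun p : ℝ × ℝ => w p.2) Ωc :=
    hw.comp hsndC (fun p hp => hr1le p hp)
  have hqcomp : ContDiffOn ℝ 1 (fun p : ℝ × ℝ => q p.2) Ωc :=
    hq.comp hsndC (fun p hp => hr1le p hp)
  have hgm1comp : ContDiffOn ℝ 1
      (fun p : ℝ × ℝ => gmp 1 (lamc p.1 p.2 - q p.2)) Ωc := by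
    refine (contDiffOn_gmp 1).comp (hlamC1.sub hqcomp) fun p hp => ?_
    have := hqu p.2 (hr1le p hp)
    have := hlamgt p hp
    simp only [Set.mem_Ioi, sub_pos]
    linarith
  have hΦm3comp : ContDiffOn ℝ 1 (fun p : ℝ × ℝ => Φm3 (lamc p.1 p.2, p.2)) Ωc :=
    hΦm3C.comp hpairC hmapsV
  have hVo : IsOpen ((Set.Ioi a) ×ˢ (Set.Ioi r1)) := isOpen_Ioi.prod isOpen_Ioi
  have hφC : ContDiffOn ℝ 1 φ ((Set.Ioi a) ×ˢ (Set.Ioi r1)) := by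
    have h1 : ContDiffOn ℝ 1 (fun v : ℝ × ℝ => w v.2) ((Set.Ioi a) ×ˢ (Set.Ioi r1)) :=
      hw.comp contDiff_snd.contDiffOn (fun v hv => Set.mem_Ici.2 (le_of_lt hv.2))
    have h2 : ContDiffOn ℝ 1 (fun v : ℝ × ℝ => q v.2) ((Set.Ioi a) ×ˢ (Set.Ioi r1)) :=
      hq.comp contDiff_snd.contDiffOn (fun v hv => Set.mem_Ici.2 (le_of_lt hv.2))
    have h3 : ContDiffOn ℝ 1 (fun v : ℝ × ℝ => gmp 1 (v.1 - q v.2))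
        ((Set.Ioi a) ×ˢ (Set.Ioi r1)) := by
      refine (contDiffOn_gmp 1).comp (contDiff_fst.contDiffOn.sub h2) fun v hv => ?_
      have := hqu v.2 (le_of_lt hv.2)
      have hv1 : a < v.1 := hv.1
      simp only [Set.mem_Ioi, sub_pos]
      linarith
    have h4 : ContDiffOn ℝ 1 Φm3 ((Set.Ioi a) ×ˢ (Set.Ioi r1)) :=
      hΦm3C.mono (fun v hv => ⟨hv.1, trivial⟩)
    exact (h1.mul h3).mul (h4.inv (fun v hv => ne_of_gt (hHpos _ _ hv.1 hv.2)))
  have hmapsV' : Set.MapsTo (fun p : ℝ × ℝ => (lamc p.1 p.2, p.2)) Ωc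
      ((Set.Ioi a) ×ˢ (Set.Ioi r1)) := fun p hp => ⟨hlamgt p hp, hr1lt p hp⟩
  have hψC : ContDiffOn ℝ 1 ψ Ωc := hφC.comp hpairC hmapsV'
  have hsqrtC : ContDiffOn ℝ 1 Real.sqrt (Set.Ioi 0) := fun x hx =>
    (Real.contDiffAt_sqrt (ne_of_gt hx)).contDiffWithinAt
  have hsqψC : ContDiffOn ℝ 1 (fun p : ℝ × ℝ => Real.sqrt (ψ p)) Ωc := by
    refine hsqrtC.comp hψC fun p hp => ?_
    rw [← hDψ p hp]
    exact (hD p hp).2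
  have hofRealC : ContDiff ℝ 1 (fun x : ℝ => (x : ℂ)) := Complex.ofRealCLM.contDiff
  have hcexpC : ContDiffOn ℝ 1
      (fun p : ℝ × ℝ => Complex.exp (Complex.I
        * ((Φ1 (lamc p.1 p.2, p.2) - p.1 * lamc p.1 p.2 : ℝ) : ℂ))) Ωc := by
    refine Complex.contDiff_exp.comp_contDiffOn ?_
    exact contDiffOn_const.mul (hofRealC.comp_contDiffOn hK1C)
  have hA : ContDiffOn ℝ 1 (fun p : ℝ × ℝ => u p.1 p.2) Ωc := by
    refine ContDiffOn.congr (f := fun p : ℝ × ℝ =>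
      Complex.exp (Complex.I * ((Φ1 (lamc p.1 p.2, p.2) - p.1 * lamc p.1 p.2 : ℝ) : ℂ))
        * ((Real.sqrt (ψ p) : ℝ) : ℂ) * Z (lamc p.1 p.2)) ?_ ?_
    · exact (hcexpC.mul (hofRealC.comp_contDiffOn hsqψC)).mul (hZ.comp_contDiffOn hlamC1)
    · intro p hp
      rw [hu, hK1eq p.1 p.2 (hr1le p hp), hDψ p hp]
  refine ⟨hA, ?_⟩
    -- Part B : the pointwise transport equation
  rintro ⟨t, r⟩ hp
  simp only
  have hrgt : r1 < r := hr1lt (t, r) hp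
  have hrle : r1 ≤ r := le_of_lt hrgt
  set lv := lamc t r with hlv
  have hla : a < lv := hlamgt (t, r) hp
  have hqr : q r ≤ a := hqu r hrle
  have hx0pos : 0 < lv - q r := by linarith
  set x0 := lv - q r with hx0
  set W := w r with hW
  have hWpos : 0 < W := lt_of_lt_of_le hc1 (hwl r hrle)
  have hWne : W ≠ 0 := ne_of_gt hWpos
  set g1x := gsq x0 with hg1x
  set gm1x := gmp 1 x0 with hgm1x
  set gm3x := gmp 3 x0 with hgm3x
  have hg1pos : 0 < g1x := gsq_pos hx0pos
  have hg1ne : g1x ≠ 0 := ne_of_gt hg1pos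
  have hgm1eq : gm1x = g1x⁻¹ := by simp [hgm1x, hg1x, gmp, gsq]
  have hgm3eq : gm3x = g1x⁻¹ ^ 3 := by simp [hgm3x, hg1x, gmp, gsq]
  have hg1sq : g1x ^ 2 = 2 * x0 := by
    simp only [hg1x, gsq]
    rw [sq]
    exact Real.mul_self_sqrt (by linarith)
  set Hv := Φm3 (lv, r) with hHv
  have hHvpos : 0 < Hv := hHpos lv r hla hrgt
  have hHvne : Hv ≠ 0 := ne_of_gt hHvpos
  set Dp := D t r with hDp
  have hDppos : 0 < Dp := (hD (t, r) hp).2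
  have hDpne : Dp ≠ 0 := ne_of_gt hDppos
  set sD := Real.sqrt Dp with hsD
  have hsDpos : 0 < sD := Real.sqrt_pos.2 hDppos
  have hsDne : sD ≠ 0 := ne_of_gt hsDpos
  have hsDsq : sD ^ 2 = Dp := by
    rw [hsD, sq]
    exact Real.mul_self_sqrt (le_of_lt hDppos)
  set Dt := fderiv ℝ (fun p' : ℝ × ℝ => lamc p'.1 p'.2) (t, r) (1, 0) with hDt
  have hR1v : Hv * Dp = W * gm1x := by
    have h := hR1 (t, r) hp
    rwa [hwteq r hrle, hqteq r hrle] at h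
  have hR2v : Hv * Dt = -1 := hR2 (t, r) hp
  have hlamtd : HasDerivAt (fun t' => lamc t' r) Dt t := hlamt (t, r) hp
  have hlamrd : HasDerivAt (fun r' => lamc t r') Dp r := (hD (t, r) hp).1
  -- derivatives of w and q at r
  have hIci : Set.Ici r1 ∈ nhds r := Filter.mem_of_superset (Ioi_mem_nhds hrgt)
    Set.Ioi_subset_Ici_self
  have hwd : HasDerivAt w (deriv w r) r :=
    ((hw.contDiffAt hIci).differentiableAt one_ne_zero).hasDerivAt
  have hqd : HasDerivAt q (deriv q r) r :=
    ((hq.contDiffAt hIci).differentiableAt one_ne_zero).hasDerivAt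
  set W' := deriv w r with hW'
  set Q' := deriv q r with hQ'
  -- the value Φm1(lv, r) = t
  have hA1 : (∫ s in r1..r, wt s * gmp 1 (lv - qt s)) = t := by
    have h := (hlamc (t, r) hp).2
    rw [hTeq _ _ hrle] at h
    exact h
  -- K1 derivatives
  have hΦ1fd : HasFDerivAt Φ1
      ((∫ s in r1..r, wt s * gmp 1 (lv - qt s)) • ContinuousLinearMap.fst ℝ ℝ ℝ
        + (wt r * gsq (lv - qt r)) • ContinuousLinearMap.snd ℝ ℝ ℝ) (lv, r) :=
    phi_hasFDerivAt hwtc hqtc hqta hd_gsq (hc_gm 1) hla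
  have hB1eq : wt r * gsq (lv - qt r) = W * g1x := by
    rw [hwteq r hrle, hqteq r hrle]
  have hKt : HasDerivAt (fun t' => K1 t' r) (-lv) t := by
    have h1 : HasDerivAt (fun t' => Φ1 (lamc t' r, r))
        ((∫ s in r1..r, wt s * gmp 1 (lv - qt s)) * Dt + (wt r * gsq (lv - qt r)) * 0) t :=
      hasDerivAt_comp_curve hΦ1fd hlamtd (hasDerivAt_const t r)
    have h2 : HasDerivAt (fun t' => t' * lamc t' r) (1 * lv + t * Dt) t :=
      (hasDerivAt_id t).mul hlamtd
    have h3 := h1.sub h2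
    have hval : (∫ s in r1..r, wt s * gmp 1 (lv - qt s)) * Dt
        + (wt r * gsq (lv - qt r)) * 0 - (1 * lv + t * Dt) = -lv := by
      rw [hA1]; ring
    rw [hval] at h3
    refine h3.congr_of_eventuallyEq ?_
    filter_upwards [hmemt (t, r) hp] with t' ht'
    exact hK1eq t' r hrle
  have hKr : HasDerivAt (fun r' => K1 t r') (W * g1x) r := by
    have h1 : HasDerivAt (fun r' => Φ1 (lamc t r', r'))
        ((∫ s in r1..r, wt s * gmp 1 (lv - qt s)) * Dp + (wt r * gsq (lv - qt r)) * 1) r :=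
      hasDerivAt_comp_curve hΦ1fd hlamrd (hasDerivAt_id r)
    have h2 : HasDerivAt (fun r' => t * lamc t r') (t * Dp) r := hlamrd.const_mul t
    have h3 := h1.sub h2
    have hval : (∫ s in r1..r, wt s * gmp 1 (lv - qt s)) * Dp
        + (wt r * gsq (lv - qt r)) * 1 - t * Dp = W * g1x := by
      rw [hA1, hB1eq]; ring
    rw [hval] at h3
    refine h3.congr_of_eventuallyEq ?_
    filter_upwards [hmemr (t, r) hp] with r' hr'
    exact hK1eq t r' (le_of_lt (hr1lt (t, r') hr'))
  -- bhat value and derivative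
  set b := W⁻¹ * g1x with hb
  have hbv : bhat t r = b := by rw [hbhat]; rfl
  set Bp := -W' / W ^ 2 * g1x + W⁻¹ * (gm1x * (Dp - Q')) with hBp
  have hbd : HasDerivAt (fun r' => bhat t r') Bp r := by
    have hinner : HasDerivAt (fun r' => lamc t r' - q r') (Dp - Q') r := hlamrd.sub hqd
    have hsq : HasDerivAt (fun r' => gsq (lamc t r' - q r')) (gm1x * (Dp - Q')) r :=
      (hd_gsq x0 hx0pos).comp (h₂ := gsq) r hinner
    have hwinv : HasDerivAt (fun r' => (w r')⁻¹) (-W' / W ^ 2) r := hwd.inv hWne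
    have hprod := hwinv.mul hsq
    have hfun : (fun r' => bhat t r') = fun r' => (w r')⁻¹ * gsq (lamc t r' - q r') := by
      funext r'
      rw [hbhat]
      rfl
    rw [hfun]
    exact hprod.congr_deriv rfl
  -- φ partial derivatives
  have hφfd : HasFDerivAt φ (fderiv ℝ φ (lv, r)) (lv, r) :=
    ((hφC.contDiffAt (hVo.mem_nhds (show (lv, r) ∈ (Set.Ioi a) ×ˢ (Set.Ioi r1) from ⟨hla, hrgt⟩))).differentiableAt one_ne_zero).hasFDerivAt
  set φl := fderiv ℝ φ (lv, r) (1, 0) with hφl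
  set φr := fderiv ℝ φ (lv, r) (0, 1) with hφr
  -- vertical derivative of φ, explicitly
  have hΦm3vert : HasDerivAt (fun r' => Φm3 (lv, r')) (wt r * gmp 3 (lv - qt r)) r := by
    have hfd3 : HasFDerivAt Φm3
        ((∫ s in r1..r, wt s * (-3 * gmp 5 (lv - qt s))) • ContinuousLinearMap.fst ℝ ℝ ℝ
          + (wt r * gmp 3 (lv - qt r)) • ContinuousLinearMap.snd ℝ ℝ ℝ) (lv, r) :=
      phi_hasFDerivAt hwtc hqtc hqta hd_gm3 hc_gm5' hla
    have h := hasDerivAt_comp_curve hfd3 (hasDerivAt_const r lv) (hasDerivAt_id r)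
    simpa using h
  have hB3eq : wt r * gmp 3 (lv - qt r) = W * gm3x := by
    rw [hwteq r hrle, hqteq r hrle]
  set φrval := (W' * gm1x + W * (gm3x * Q')) * Hv⁻¹
      + W * gm1x * (-(W * gm3x) / Hv ^ 2) with hφrval
  have hφvert : HasDerivAt (fun r' => φ (lv, r')) φrval r := by
    have h1 : HasDerivAt (fun r' => w r' * gmp 1 (lv - q r'))
        (W' * gm1x + W * (gm3x * Q')) r := by
      have hinner : HasDerivAt (fun r' => lv - q r') (-Q') r := by
        simpa using (hqd.const_sub lv)
      have hgm1d : HasDerivAt (fun r' => gmp 1 (lv - q r')) (-gm3x * -Q') r :=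
        (hd_gm1 x0 hx0pos).comp (h₂ := gmp 1) r hinner
      have h := hwd.mul hgm1d
      refine h.congr_deriv ?_
      ring
    have h2 : HasDerivAt (fun r' => (Φm3 (lv, r'))⁻¹) (-(W * gm3x) / Hv ^ 2) r := by
      have h := hΦm3vert.inv hHvne
      rw [hB3eq] at h
      exact h
    have h := h1.mul h2
    have hfun : (fun r' => φ (lv, r')) = fun r' => w r' * gmp 1 (lv - q r') * (Φm3 (lv, r'))⁻¹ := by
      funext r'
      rw [hφdef]
    rw [hfun]
    exact h.congr_deriv rfl
  have hφr_eq : φr = φrval := by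
    have h := hφfd.comp_hasDerivAt r ((hasDerivAt_const r lv).prodMk (hasDerivAt_id r))
    rw [clm_eval2] at h
    simp only [zero_mul, one_mul, zero_add] at h
    exact h.unique hφvert
    -- derivatives of D along the two directions
  have hDtd : HasDerivAt (fun t' => D t' r) (φl * Dt) t := by
    have h := hφfd.comp_hasDerivAt t (hlamtd.prodMk (hasDerivAt_const t r))
    rw [clm_eval2] at h
    have h2 : Dt * fderiv ℝ φ (lv, r) (1, 0) + 0 * fderiv ℝ φ (lv, r) (0, 1)
        = φl * Dt := by rw [← hφl]; ring
    rw [h2] at h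
    refine h.congr_of_eventuallyEq ?_
    filter_upwards [hmemt (t, r) hp] with t' ht'
    exact hDψ (t', r) ht'
  have hDrd : HasDerivAt (fun r' => D t r') (Dp * φl + φr) r := by
    have hcurve : HasDerivAt (fun r' => (lamc t r', r')) ((Dp, 1) : ℝ × ℝ) r :=
      hlamrd.prodMk (hasDerivAt_id' (x := r))
    have h := HasFDerivAt.comp_hasDerivAt_of_eq (x := r) hφfd hcurve rfl
    rw [clm_eval2] at h
    have h2 : Dp * fderiv ℝ φ (lv, r) (1, 0) + 1 * fderiv ℝ φ (lv, r) (0, 1)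
        = Dp * φl + φr := by rw [← hφl, ← hφr]; ring
    rw [h2] at h
    refine h.congr_of_eventuallyEq ?_
    filter_upwards [hmemr (t, r) hp] with r' hr'
    exact hDψ (t, r') hr'
  -- derivatives of √D
  have hsqt : HasDerivAt (fun t' => Real.sqrt (D t' r)) (1 / (2 * sD) * (φl * Dt)) t :=
    (Real.hasDerivAt_sqrt hDpne).comp t hDtd
  have hsqr : HasDerivAt (fun r' => Real.sqrt (D t r')) (1 / (2 * sD) * (Dp * φl + φr)) r :=
    (Real.hasDerivAt_sqrt hDpne).comp r hDrd
  -- derivative of Z ∘ lamc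
  have hZd : HasDerivAt Z (deriv Z lv) lv := ((hZ.differentiable one_ne_zero) lv).hasDerivAt
  set Z' := deriv Z lv with hZ'
  have hZt : HasDerivAt (fun t' => Z (lamc t' r)) (Dt • Z') t := hZd.scomp t hlamtd
  have hZr : HasDerivAt (fun r' => Z (lamc t r')) (Dp • Z') r := hZd.scomp r hlamrd
  -- derivatives of u
  set E := Complex.exp (Complex.I * (K1 t r : ℂ)) with hE
  have hexp_t : HasDerivAt (fun t' => Complex.exp (Complex.I * (K1 t' r : ℂ)))
      (E * (Complex.I * ((-lv : ℝ) : ℂ))) t := by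
    have h1 : HasDerivAt (fun t' => ((K1 t' r : ℝ) : ℂ)) ((-lv : ℝ) : ℂ) t :=
      hKt.ofReal_comp
    exact (h1.const_mul Complex.I).cexp
  have hexp_r : HasDerivAt (fun r' => Complex.exp (Complex.I * (K1 t r' : ℂ)))
      (E * (Complex.I * ((W * g1x : ℝ) : ℂ))) r := by
    have h1 : HasDerivAt (fun r' => ((K1 t r' : ℝ) : ℂ)) ((W * g1x : ℝ) : ℂ) r :=
      hKr.ofReal_comp
    exact (h1.const_mul Complex.I).cexp
  have hsq_tC : HasDerivAt (fun t' => ((Real.sqrt (D t' r) : ℝ) : ℂ))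
      ((1 / (2 * sD) * (φl * Dt) : ℝ) : ℂ) t := hsqt.ofReal_comp
  have hsq_rC : HasDerivAt (fun r' => ((Real.sqrt (D t r') : ℝ) : ℂ))
      ((1 / (2 * sD) * (Dp * φl + φr) : ℝ) : ℂ) r := hsqr.ofReal_comp
  have hut : HasDerivAt (fun t' => u t' r)
      ((E * (Complex.I * ((-lv : ℝ) : ℂ)) * ((sD : ℝ) : ℂ)
          + E * ((1 / (2 * sD) * (φl * Dt) : ℝ) : ℂ)) * Z lv
        + E * ((sD : ℝ) : ℂ) * (Dt • Z')) t := by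
    have h := (hexp_t.mul hsq_tC).mul hZt
    have hfun : (fun t' => u t' r) = fun t' =>
        Complex.exp (Complex.I * (K1 t' r : ℂ))
          * ((Real.sqrt (D t' r) : ℝ) : ℂ) * Z (lamc t' r) := funext fun t' => hu t' r
    rw [hfun]
    exact h
  have hur : HasDerivAt (fun r' => u t r')
      ((E * (Complex.I * ((W * g1x : ℝ) : ℂ)) * ((sD : ℝ) : ℂ)
          + E * ((1 / (2 * sD) * (Dp * φl + φr) : ℝ) : ℂ)) * Z lv
        + E * ((sD : ℝ) : ℂ) * (Dp • Z')) r := by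
    have h := (hexp_r.mul hsq_rC).mul hZr
    have hfun : (fun r' => u t r') = fun r' =>
        Complex.exp (Complex.I * (K1 t r' : ℂ))
          * ((Real.sqrt (D t r') : ℝ) : ℂ) * Z (lamc t r') := funext fun r' => hu t r'
    rw [hfun]
    exact h
  -- the three scalar identities
  have hbWgm1 : b * (W * gm1x) = 1 := by
    rw [hb, hgm1eq]
    field_simp
  have hS2 : Dt + b * Dp = 0 := by
    have h : Hv * (Dt + b * Dp) = 0 := by
      calc Hv * (Dt + b * Dp) = Hv * Dt + b * (Hv * Dp) := by ring
        _ = -1 + b * (W * gm1x) := by rw [hR2v, hR1v]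
        _ = 0 := by rw [hbWgm1]; ring
    exact (mul_eq_zero.1 h).resolve_left hHvne
  have hS1 : -lv + b * (W * g1x) = lv - 2 * q r := by
    have h : b * (W * g1x) = g1x ^ 2 := by
      rw [hb]
      field_simp
    rw [h, hg1sq, hx0]
    ring
  have hGM1 : g1x * gm1x = 1 := by rw [hgm1eq]; field_simp
  have hGM3 : g1x ^ 3 * gm3x = 1 := by rw [hgm3eq]; field_simp
  have hDp2 : Dp = W / (Hv * g1x) := by
    rw [eq_div_iff (mul_ne_zero hHvne hg1ne)]
    linear_combination g1x * hR1v + W * hGM1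
  have hS3core : b * φrval + Bp * Dp = 0 := by
    rw [hφrval, hBp, hb, hgm1eq, hgm3eq, hDp2]
    field_simp
    ring
  have hkey : φl * Dt + b * (Dp * φl + φrval) + Bp * Dp = 0 := by
    linear_combination φl * hS2 + hS3core
  have hS3 : (1 / (2 * sD) * (φl * Dt)) + b * (1 / (2 * sD) * (Dp * φl + φr))
      + (1 / 2) * Bp * sD = 0 := by
    rw [hφr_eq]
    have hstep : (1 / (2 * sD) * (φl * Dt)) + b * (1 / (2 * sD) * (Dp * φl + φrval))
        + (1 / 2) * Bp * sD
        = (φl * Dt + b * (Dp * φl + φrval) + Bp * sD ^ 2) * (1 / (2 * sD)) := by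
      field_simp
    rw [hstep, hsDsq, hkey, zero_mul]
  -- cast to ℂ
  have hS1c := congrArg (fun x : ℝ => (x : ℂ)) hS1
  have hS2c := congrArg (fun x : ℝ => (x : ℂ)) hS2
  have hS3c := congrArg (fun x : ℝ => (x : ℂ)) hS3
  push_cast at hS1c hS2c hS3c
  -- conclude
  have hbdC : HasDerivAt (fun r' => ((bhat t r' : ℝ) : ℂ)) ((Bp : ℝ) : ℂ) r :=
    hbd.ofReal_comp
  rw [hut.deriv, hur.deriv, hbdC.deriv, hbv, hu t r]
  simp only [Complex.real_smul]
  linear_combination (norm := (push_cast; ring1)) (E * (sD : ℂ) * Z lv * Complex.I) * hS1c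
    + (E * (sD : ℂ) * Z') * hS2c + (E * Z lv) * hS3c
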